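/- Let m, k ≥ 1 be integers, n ∈ ℕ, 0 < α ≤ 1 ≤ β. Suppose that for every set X of n points in ℝ^m there exists a map f : X → ℝ^k with α·‖x − x'‖ ≤ ‖f(x) − f(x')‖ ≤ β·‖x − x'‖ for all x, x' ∈ X (Euclidean norms). Then for every set P of n points of the form (z, x) with z > 0 and x ∈ ℝ^m, there exists a map g : P → (0,∞) × ℝ^k such that α·d_H(p, p') ≤ d_H(g(p), g(p')) ≤ β·d_H(p, p') for all p, p' ∈ P, where d_H((z,x),(z',x')) = arcosh(1 + (‖x − x'‖² + (z − z')²)/(2·z·z')). -/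

import Mathlib

lemma sinh_mul_le {c t : ℝ} (hc0 : 0 ≤ c) (hc1 : c ≤ 1) (ht : 0 ≤ t) :
    Real.sinh (c * t) ≤ c * Real.sinh t := by
  have key : MonotoneOn (fun s => c * Real.sinh s - Real.sinh (c * s)) (Set.Ici 0) := by
    apply monotoneOn_of_deriv_nonneg (convex_Ici 0)
    · exact (Continuous.sub (continuous_const.mul Real.continuous_sinh)
        (Real.continuous_sinh.comp (continuous_const.mul continuous_id))).continuousOn
    · intro s _
      apply DifferentiableAt.differentiableWithinAt
      exact (Real.differentiable_sinh s).const_mul c |>.sub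
        ((Real.differentiable_sinh (c * s)).comp s ((differentiable_id.const_mul c) s))
    · intro s hs
      rw [interior_Ici] at hs
      have hds : HasDerivAt (fun s => c * Real.sinh s - Real.sinh (c * s))
          (c * Real.cosh s - Real.cosh (c * s) * c) s := by
        have h1 : HasDerivAt Real.sinh (Real.cosh s) s := Real.hasDerivAt_sinh s
        have h2 : HasDerivAt (fun s => Real.sinh (c * s)) (Real.cosh (c * s) * c) s := by
          have := (Real.hasDerivAt_sinh (c * s)).comp s
            ((hasDerivAt_id s).const_mul c)
          exact this.congr_deriv (by ring)
        exact (h1.const_mul c).sub h2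
      rw [hds.deriv]
      have : Real.cosh (c * s) ≤ Real.cosh s := by
        rw [Real.cosh_le_cosh]
        have hs' : (0:ℝ) < s := hs
        rw [abs_of_nonneg (mul_nonneg hc0 hs'.le), abs_of_nonneg hs'.le]
        nlinarith [mul_nonneg (sub_nonneg.2 hc1) hs'.le]
      nlinarith
  have := key (Set.self_mem_Ici) (Set.mem_Ici.2 ht) ht
  simp at this
  linarith



/-- The inverse hyperbolic cosine. -/
noncomputable def arcosh (x : ℝ) : ℝ := Real.log (x + Real.sqrt (x ^ 2 - 1))

lemma arcosh_nonneg {x : ℝ} (hx : 1 ≤ x) : 0 ≤ arcosh x := by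
  unfold arcosh
  apply Real.log_nonneg
  have := Real.sqrt_nonneg (x ^ 2 - 1)
  linarith

lemma cosh_arcosh {x : ℝ} (hx : 1 ≤ x) : Real.cosh (arcosh x) = x := by
  unfold arcosh
  have h1 : (0:ℝ) ≤ x ^ 2 - 1 := by nlinarith
  have hsq : Real.sqrt (x ^ 2 - 1) ^ 2 = x ^ 2 - 1 := Real.sq_sqrt h1
  have hsn : 0 ≤ Real.sqrt (x ^ 2 - 1) := Real.sqrt_nonneg _
  have hy : 0 < x + Real.sqrt (x ^ 2 - 1) := by linarith
  rw [Real.cosh_eq, Real.exp_log hy, Real.exp_neg, Real.exp_log hy]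
  have hinv : (x + Real.sqrt (x ^ 2 - 1))⁻¹ = x - Real.sqrt (x ^ 2 - 1) := by
    apply inv_eq_of_mul_eq_one_right
    nlinarith [hsq]
  rw [hinv]; ring

lemma le_arcosh {a b : ℝ} (ha : 0 ≤ a) (hb : 1 ≤ b) (h : Real.cosh a ≤ b) : a ≤ arcosh b := by
  have h2 : Real.cosh a ≤ Real.cosh (arcosh b) := by rw [cosh_arcosh hb]; exact h
  rw [Real.cosh_le_cosh, abs_of_nonneg ha, abs_of_nonneg (arcosh_nonneg hb)] at h2
  exact h2

lemma arcosh_mono {a b : ℝ} (ha : 1 ≤ a) (hab : a ≤ b) : arcosh a ≤ arcosh b :=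
  le_arcosh (arcosh_nonneg ha) (ha.trans hab) (by rw [cosh_arcosh ha]; exact hab)

lemma arcosh_scale {c u : ℝ} (hc0 : 0 ≤ c) (hc1 : c ≤ 1) (hu : 0 ≤ u) :
    c * arcosh (1 + u) ≤ arcosh (1 + c ^ 2 * u) := by
  set t := arcosh (1 + u) with htdef
  have ht : 0 ≤ t := arcosh_nonneg (by linarith)
  have hcosh : Real.cosh t = 1 + u := cosh_arcosh (by linarith)
  have hhalf : Real.cosh (c * t) = 1 + 2 * Real.sinh (c * t / 2) ^ 2 := by
    have := Real.cosh_two_mul (c * t / 2)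
    have h2 := Real.cosh_sq (c * t / 2)
    rw [show 2 * (c * t / 2) = c * t by ring] at this
    rw [this, h2]; ring
  have hhalf' : Real.cosh t = 1 + 2 * Real.sinh (t / 2) ^ 2 := by
    have := Real.cosh_two_mul (t / 2)
    have h2 := Real.cosh_sq (t / 2)
    rw [show 2 * (t / 2) = t by ring] at this
    rw [this, h2]; ring
  have hsle : Real.sinh (c * t / 2) ≤ c * Real.sinh (t / 2) := by
    have := sinh_mul_le hc0 hc1 (by linarith : (0:ℝ) ≤ t / 2)
    rw [show c * (t / 2) = c * t / 2 by ring] at this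
    exact this
  have hsn : 0 ≤ Real.sinh (c * t / 2) := Real.sinh_nonneg_iff.2 (by positivity)
  have hcle : Real.cosh (c * t) ≤ 1 + c ^ 2 * u := by
    have hsq : Real.sinh (c * t / 2) ^ 2 ≤ c ^ 2 * Real.sinh (t / 2) ^ 2 := by
      nlinarith [Real.sinh_nonneg_iff.2 (by linarith : (0:ℝ) ≤ t / 2)]
    nlinarith
  exact le_arcosh (mul_nonneg hc0 ht) (by nlinarith) hcle

/-- The hyperbolic distance, in the Poincaré half-space model, between points
`(z, x)` and `(z', x')` with heights `z, z' > 0`. -/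
noncomputable def dH {E : Type*} [NormedAddCommGroup E] (z : ℝ) (x : E) (z' : ℝ) (x' : E) : ℝ :=
  arcosh (1 + (‖x - x'‖ ^ 2 + (z - z') ^ 2) / (2 * z * z'))


lemma arcosh_sandwich {α β A B : ℝ} (hα0 : 0 < α) (hα1 : α ≤ 1) (hβ : 1 ≤ β)
    (hA : 0 ≤ A) (h1 : α ^ 2 * A ≤ B) (h2 : B ≤ β ^ 2 * A) :
    α * arcosh (1 + A) ≤ arcosh (1 + B) ∧ arcosh (1 + B) ≤ β * arcosh (1 + A) := by
  have hβ0 : (0:ℝ) < β := by linarith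
  have hB : 0 ≤ B := le_trans (by positivity) h1
  constructor
  · calc α * arcosh (1 + A) ≤ arcosh (1 + α ^ 2 * A) := arcosh_scale hα0.le hα1 hA
      _ ≤ arcosh (1 + B) := arcosh_mono (by nlinarith) (by linarith)
  · have hs := arcosh_scale (c := 1 / β) (u := β ^ 2 * A) (by positivity)
      (by rw [div_le_one hβ0]; exact hβ) (by positivity)
    have heq : (1 / β) ^ 2 * (β ^ 2 * A) = A := by field_simp
    rw [heq] at hs
    have hmain : arcosh (1 + β ^ 2 * A) ≤ β * arcosh (1 + A) := by
      have := mul_le_mul_of_nonneg_left hs hβ0.le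
      rw [← mul_assoc, mul_one_div, div_self hβ0.ne', one_mul] at this
      exact this
    exact le_trans (arcosh_mono (by linarith) (by linarith)) hmain

/-- Theorem 1.5: an `(α, β)`-approximate Euclidean dimension reduction from
dimension `m` to dimension `k` (for `n`-point sets) yields an `(α, β)`-approximate
hyperbolic dimension reduction from dimension `m + 1` to dimension `k + 1`. -/
theorem hyperbolic_dimension_reduction (m k : ℕ) (hm : 1 ≤ m) (hk : 1 ≤ k)
    (n : ℕ) (α β : ℝ) (hα0 : 0 < α) (hα1 : α ≤ 1) (hβ : 1 ≤ β)
    (heuclid : ∀ x : Fin n → EuclideanSpace ℝ (Fin m),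
      ∃ f : Fin n → EuclideanSpace ℝ (Fin k),
        ∀ i j, α * ‖x i - x j‖ ≤ ‖f i - f j‖ ∧ ‖f i - f j‖ ≤ β * ‖x i - x j‖) :
    ∀ p : Fin n → ℝ × EuclideanSpace ℝ (Fin m), (∀ i, 0 < (p i).1) →
      ∃ g : Fin n → ℝ × EuclideanSpace ℝ (Fin k), (∀ i, 0 < (g i).1) ∧
        ∀ i j,
          α * dH (p i).1 (p i).2 (p j).1 (p j).2 ≤
            dH (g i).1 (g i).2 (g j).1 (g j).2 ∧
          dH (g i).1 (g i).2 (g j).1 (g j).2 ≤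
            β * dH (p i).1 (p i).2 (p j).1 (p j).2 := by
  intro p hp
  obtain ⟨f, hf⟩ := heuclid (fun i => (p i).2)
  refine ⟨fun i => ((p i).1, f i), fun i => hp i, fun i j => ?_⟩
  obtain ⟨hfl, hfu⟩ := hf i j
  have hzi := hp i
  have hzj := hp j
  have hD : 0 < 2 * (p i).1 * (p j).1 := by positivity
  have hα2 : α ^ 2 ≤ 1 := by nlinarith
  have hβ2 : 1 ≤ β ^ 2 := by nlinarith
  have hnx : (0:ℝ) ≤ ‖(p i).2 - (p j).2‖ := norm_nonneg _
  have hnf : (0:ℝ) ≤ ‖f i - f j‖ := norm_nonneg _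
  have hnum1 : α ^ 2 * (‖(p i).2 - (p j).2‖ ^ 2 + ((p i).1 - (p j).1) ^ 2) ≤
      ‖f i - f j‖ ^ 2 + ((p i).1 - (p j).1) ^ 2 := by
    nlinarith [mul_nonneg hα0.le hnx, sq_nonneg ((p i).1 - (p j).1),
      mul_nonneg (sub_nonneg.2 hα2) (sq_nonneg ((p i).1 - (p j).1))]
  have hnum2 : ‖f i - f j‖ ^ 2 + ((p i).1 - (p j).1) ^ 2 ≤
      β ^ 2 * (‖(p i).2 - (p j).2‖ ^ 2 + ((p i).1 - (p j).1) ^ 2) := by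
    nlinarith [mul_nonneg (by linarith : (0:ℝ) ≤ β) hnx, sq_nonneg ((p i).1 - (p j).1),
      mul_nonneg (sub_nonneg.2 hβ2) (sq_nonneg ((p i).1 - (p j).1))]
  have hA : α ^ 2 * ((‖(p i).2 - (p j).2‖ ^ 2 + ((p i).1 - (p j).1) ^ 2) /
      (2 * (p i).1 * (p j).1)) ≤ (‖f i - f j‖ ^ 2 + ((p i).1 - (p j).1) ^ 2) /
      (2 * (p i).1 * (p j).1) := by
    rw [← mul_div_assoc]
    exact div_le_div_of_nonneg_right hnum1 hD.le |>.trans_eq rfl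
  have hB : (‖f i - f j‖ ^ 2 + ((p i).1 - (p j).1) ^ 2) / (2 * (p i).1 * (p j).1) ≤
      β ^ 2 * ((‖(p i).2 - (p j).2‖ ^ 2 + ((p i).1 - (p j).1) ^ 2) /
      (2 * (p i).1 * (p j).1)) := by
    rw [← mul_div_assoc]
    exact div_le_div_of_nonneg_right hnum2 hD.le |>.trans_eq rfl
  exact arcosh_sandwich hα0 hα1 hβ (by positivity) hA hB
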